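/- Let S = ⟨a_1,…,a_n⟩ ⊆ ℤ^m ⊕ T be a reduced monoid and S̃ = ⟨(a_1,1),…,(a_n,1)⟩ ⊆ ℤ^{m+1} ⊕ T. Then: (1) c_eq(S) = 0 if and only if the lattice ideal I_{S̃} is the zero ideal; (2) if I_{S̃} ≠ 0 and {f_1,…,f_s} is a binomial generating set of I_{S̃}, then c_eq(S) ≤ max_{1≤i≤s} deg(f_i); (3) if {f_1,…,f_s} is a binomial minimal generating set of I_{S̃}, then c_eq(S) = max_{1≤i≤s} deg(f_i), where deg denotes the total degree. -/

import Mathlib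

open MvPolynomial

/-- The `S`-degree of an exponent vector. -/
def degS {n : ℕ} {G : Type*} [AddCommMonoid G] (a : Fin n → G) (lam : Fin n → ℕ) : G :=
  ∑ i, lam i • a i

/-- The lattice ideal of the monoid generated by `a`. -/
noncomputable def latticeIdeal (K : Type) [Field K] {n : ℕ} {G : Type*} [AddCommMonoid G]
    (a : Fin n → G) : Ideal (MvPolynomial (Fin n) K) :=
  Ideal.span {f | ∃ α β : Fin n →₀ ℕ, degS a ⇑α = degS a ⇑β ∧
    f = monomial α (1 : K) - monomial β 1}

/-- The distance between two factorizations. -/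
def factDist {n : ℕ} (lam nu : Fin n → ℕ) : ℕ :=
  ∑ i, (lam i - min (lam i) (nu i))

/-- An `N`-chain of factorizations of `b`, all of the same length, joining `lam` to `nu`. -/
def IsEqChain {n : ℕ} {G : Type*} [AddCommMonoid G] (a : Fin n → G) (b : G) (N : ℕ∞)
    (lam nu : Fin n → ℕ) : Prop :=
  ∃ k, ∃ γ : Fin (k + 1) → (Fin n → ℕ),
    γ 0 = lam ∧ γ (Fin.last k) = nu ∧
    (∀ j, degS a (γ j) = b ∧ ∑ i, γ j i = ∑ i, lam i) ∧
    (∀ j : Fin k, (factDist (γ j.castSucc) (γ j.succ) : ℕ∞) ≤ N)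

/-- The equal catenary degree of an element `b`: the least `N ∈ ℕ ∪ {∞}` such that
any two factorizations of `b` of the same length are joined by an `N`-chain. -/
noncomputable def ceqElem {n : ℕ} {G : Type*} [AddCommMonoid G] (a : Fin n → G) (b : G) :
    ℕ∞ :=
  sInf {N : ℕ∞ | ∀ lam nu : Fin n → ℕ, degS a lam = b → degS a nu = b →
    ∑ i, lam i = ∑ i, nu i → IsEqChain a b N lam nu}

/-- The equal catenary degree of the monoid generated by `a`. -/
noncomputable def ceq {n : ℕ} {G : Type*} [AddCommMonoid G] (a : Fin n → G) : ℕ∞ :=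
  ⨆ b ∈ AddSubmonoid.closure (Set.range a), ceqElem a b




section Helpers
variable {n : ℕ} {G : Type*} [AddCommMonoid G]

lemma degS_add (a : Fin n → G) (f g : Fin n → ℕ) :
    degS a (f + g) = degS a f + degS a g := by
  simp [degS, add_smul, Finset.sum_add_distrib]

lemma degS_pair (a : Fin n → G) (lam : Fin n → ℕ) :
    degS (fun j => ((a j, (1 : ℤ)) : G × ℤ)) lam = (degS a lam, ((∑ i, lam i : ℕ) : ℤ)) := by
  simp [degS, Prod.ext_iff, Prod.fst_sum, Prod.snd_sum, Prod.smul_mk, nsmul_eq_mul, mul_one,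
    Nat.cast_sum]

lemma weight_eq_degS (w : Fin n → G) (u : Fin n →₀ ℕ) :
    Finsupp.weight w u = degS w ⇑u := by
  rw [Finsupp.weight_apply]
  exact Finsupp.sum_fintype _ _ (by simp)

lemma degS_pair_eq_iff (a : Fin n → G) (f g : Fin n → ℕ) :
    degS (fun j => ((a j, (1 : ℤ)) : G × ℤ)) f = degS (fun j => ((a j, (1 : ℤ)) : G × ℤ)) g ↔
      degS a f = degS a g ∧ ∑ i, f i = ∑ i, g i := by
  rw [degS_pair, degS_pair, Prod.ext_iff]
  simp only [Nat.cast_sum]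
  rw [← Nat.cast_sum, ← Nat.cast_sum, Nat.cast_inj]

lemma degS_mem_closure (a : Fin n → G) (lam : Fin n → ℕ) :
    degS a lam ∈ AddSubmonoid.closure (Set.range a) := by
  refine AddSubmonoid.sum_mem _ fun i _ => AddSubmonoid.nsmul_mem _ ?_ _
  exact AddSubmonoid.subset_closure ⟨i, rfl⟩

end Helpers


section FD
variable {n : ℕ}

lemma factDist_add_sum_min (f g : Fin n → ℕ) :
    factDist f g + ∑ i, min (f i) (g i) = ∑ i, f i := by
  rw [factDist, ← Finset.sum_add_distrib]
  exact Finset.sum_congr rfl fun i _ => Nat.sub_add_cancel (min_le_left _ _)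

lemma factDist_le_sum (f g : Fin n → ℕ) : factDist f g ≤ ∑ i, f i :=
  le_of_add_le_left (factDist_add_sum_min f g).le

lemma factDist_comm_of_sum_eq {f g : Fin n → ℕ} (h : ∑ i, f i = ∑ i, g i) :
    factDist f g = factDist g f := by
  have h1 := factDist_add_sum_min f g
  have h2 := factDist_add_sum_min g f
  simp only [min_comm] at h2
  omega

lemma factDist_add_left (e f g : Fin n → ℕ) :
    factDist (e + f) (e + g) = factDist f g := by
  unfold factDist
  refine Finset.sum_congr rfl fun i _ => ?_
  simp only [Pi.add_apply]
  omega

lemma eq_of_factDist_eq_zero {f g : Fin n → ℕ} (hsum : ∑ i, f i = ∑ i, g i)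
    (h : factDist f g = 0) : f = g := by
  have hle : ∀ i, f i ≤ g i := by
    intro i
    have := Finset.sum_eq_zero_iff.mp h i (Finset.mem_univ i)
    omega
  funext i
  exact (Finset.sum_eq_sum_iff_of_le (fun i _ => hle i)).mp hsum i (Finset.mem_univ i)

end FD


section Chain
variable {n : ℕ} {G : Type*} [AddCommMonoid G] {a : Fin n → G} {b : G} {N : ℕ∞}

lemma isEqChain_refl {lam : Fin n → ℕ} (h : degS a lam = b) : IsEqChain a b N lam lam := by
  refine ⟨0, fun _ => lam, rfl, rfl, fun j => ⟨h, rfl⟩, fun j => j.elim0⟩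

lemma IsEqChain.snoc {lam nu nu' : Fin n → ℕ} (h : IsEqChain a b N lam nu)
    (h1 : degS a nu' = b) (h2 : ∑ i, nu' i = ∑ i, lam i)
    (h3 : (factDist nu nu' : ℕ∞) ≤ N) : IsEqChain a b N lam nu' := by
  obtain ⟨k, γ, h0, hl, hdeg, hd⟩ := h
  refine ⟨k + 1, Fin.snoc γ nu', ?_, ?_, ?_, ?_⟩
  · have : ((0 : Fin (k + 2))) = Fin.castSucc 0 := rfl
    rw [this, Fin.snoc_castSucc, h0]
  · rw [Fin.snoc_last]
  · intro j
    refine Fin.lastCases ?_ (fun i => ?_) j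
    · rw [Fin.snoc_last]; exact ⟨h1, h2⟩
    · rw [Fin.snoc_castSucc]; exact hdeg i
  · intro j
    refine Fin.lastCases ?_ (fun i => ?_) j
    · rw [Fin.succ_last, Fin.snoc_last, Fin.snoc_castSucc, hl]
      exact h3
    · rw [Fin.succ_castSucc, Fin.snoc_castSucc, Fin.snoc_castSucc]
      exact hd i

end Chain


/-- One "move": replace an occurrence of `gα i` by `gβ i`. -/
def MRel {n s : ℕ} (gα gβ : Fin s → (Fin n →₀ ℕ)) (u v : Fin n →₀ ℕ) : Prop :=
  ∃ i e, u = e + gα i ∧ v = e + gβ i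

section Moves
variable {n s : ℕ} {K : Type} [Field K] {gα gβ : Fin s → (Fin n →₀ ℕ)}

lemma mrel_add {e : Fin n →₀ ℕ} {u v : Fin n →₀ ℕ} (h : MRel gα gβ u v) :
    MRel gα gβ (e + u) (e + v) := by
  obtain ⟨i, e', h1, h2⟩ := h
  exact ⟨i, e + e', by rw [h1, add_assoc], by rw [h2, add_assoc]⟩

lemma quot_mk_add (e : Fin n →₀ ℕ) {u v : Fin n →₀ ℕ}
    (h : Quot.mk (MRel gα gβ) u = Quot.mk (MRel gα gβ) v) :
    Quot.mk (MRel gα gβ) (e + u) = Quot.mk (MRel gα gβ) (e + v) := by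
  have := congrArg (Quot.lift (fun w => Quot.mk (MRel gα gβ) (e + w))
    (fun x y hxy => Quot.sound (mrel_add hxy))) h
  simpa using this

/-- The `K`-span of binomial differences over `MRel`-equivalence classes. -/
noncomputable def Jspan (K : Type) [Field K] {n s : ℕ} (gα gβ : Fin s → (Fin n →₀ ℕ)) :
    Submodule K (MvPolynomial (Fin n) K) :=
  Submodule.span K {f | ∃ u v : Fin n →₀ ℕ,
    Quot.mk (MRel gα gβ) u = Quot.mk (MRel gα gβ) v ∧ f = monomial u (1 : K) - monomial v 1}

lemma mul_mem_Jspan (p : MvPolynomial (Fin n) K) {q : MvPolynomial (Fin n) K}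
    (hq : q ∈ Jspan K gα gβ) : p * q ∈ Jspan K gα gβ := by
  induction hq using Submodule.span_induction with
  | mem x hx =>
    obtain ⟨u, v, hcls, rfl⟩ := hx
    rw [p.as_sum, Finset.sum_mul]
    refine Submodule.sum_mem _ fun e he => ?_
    have key : (monomial e (coeff e p)) * (monomial u (1 : K) - monomial v 1)
        = (coeff e p) • (monomial (e + u) (1 : K) - monomial (e + v) 1) := by
      rw [mul_sub, monomial_mul, monomial_mul, smul_sub, smul_monomial, smul_monomial]
      simp
    rw [key]
    exact Submodule.smul_mem _ _ (Submodule.subset_span ⟨e + u, e + v, quot_mk_add e hcls, rfl⟩)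
  | zero => rw [mul_zero]; exact Submodule.zero_mem _
  | add x y hx hy ihx ihy => rw [mul_add]; exact Submodule.add_mem _ ihx ihy
  | smul c x hx ih => rw [mul_smul_comm]; exact Submodule.smul_mem _ _ ih

lemma idealSpan_le_Jspan {f : MvPolynomial (Fin n) K}
    (hf : f ∈ Ideal.span (Set.range fun i => monomial (gα i) (1 : K) - monomial (gβ i) 1)) :
    f ∈ Jspan K gα gβ := by
  induction hf using Submodule.span_induction with
  | mem x hx =>
    obtain ⟨i, rfl⟩ := hx
    refine Submodule.subset_span ⟨gα i, gβ i, ?_, rfl⟩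
    exact Quot.sound ⟨i, 0, (zero_add _).symm, (zero_add _).symm⟩
  | zero => exact Submodule.zero_mem _
  | add x y hx hy ihx ihy => exact Submodule.add_mem _ ihx ihy
  | smul c x hx ih => rw [smul_eq_mul]; exact mul_mem_Jspan c ih

/-- Lemma A: membership of a binomial in the ideal forces connectivity by moves. -/
lemma quot_eq_of_binomial_mem {u v : Fin n →₀ ℕ}
    (h : (monomial u (1 : K) - monomial v 1) ∈
      Ideal.span (Set.range fun i => monomial (gα i) (1 : K) - monomial (gβ i) 1)) :
    Quot.mk (MRel gα gβ) u = Quot.mk (MRel gα gβ) v := by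
  have hJ := idealSpan_le_Jspan h
  set Φ : MvPolynomial (Fin n) K →ₗ[K] ((Quot (MRel gα gβ)) →₀ K) :=
    (MvPolynomial.basisMonomials (Fin n) K).constr K
      (fun w => Finsupp.single (Quot.mk (MRel gα gβ) w) (1 : K)) with hΦ
  have hmono : ∀ w : Fin n →₀ ℕ, Φ (monomial w 1) = Finsupp.single (Quot.mk (MRel gα gβ) w) 1 := by
    intro w
    have : (monomial w (1 : K)) = (MvPolynomial.basisMonomials (Fin n) K) w := by
      rw [coe_basisMonomials]
    rw [this, hΦ, Module.Basis.constr_basis]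
  have hker : Jspan K gα gβ ≤ LinearMap.ker Φ := by
    rw [Jspan, Submodule.span_le]
    rintro x ⟨u', v', hcls, rfl⟩
    simp only [SetLike.mem_coe, LinearMap.mem_ker, map_sub, hmono, hcls, sub_self]
  have h0 : Φ (monomial u (1 : K) - monomial v 1) = 0 := hker hJ
  rw [map_sub, hmono, hmono, sub_eq_zero] at h0
  rcases (Finsupp.single_eq_single_iff _ _ _ _).mp h0 with ⟨h1, _⟩ | ⟨h1, _⟩
  · exact h1
  · exact absurd h1 one_ne_zero

end Moves


section Part2
variable {n s : ℕ} {K : Type} [Field K] {G : Type*} [AddCommMonoid G]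
variable {gα gβ : Fin s → (Fin n →₀ ℕ)} {a : Fin n → G}

/-- symmetric step -/
def SStep {n s : ℕ} (gα gβ : Fin s → (Fin n →₀ ℕ)) (u v : Fin n →₀ ℕ) : Prop :=
  MRel gα gβ u v ∨ MRel gα gβ v u

lemma rtg_of_eqvGen {u v : Fin n →₀ ℕ} (h : Relation.EqvGen (MRel gα gβ) u v) :
    Relation.ReflTransGen (SStep gα gβ) u v := by
  induction h with
  | rel x y hxy => exact Relation.ReflTransGen.single (Or.inl hxy)
  | refl x => exact Relation.ReflTransGen.refl
  | symm x y hxy ih =>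
    exact (@Relation.ReflTransGen.stdSymm _ _ ⟨fun p q hpq => Or.symm hpq⟩).symm _ _ ih
  | trans x y z _ _ ih1 ih2 => exact ih1.trans ih2

lemma sstep_deg (hdeg : ∀ i, degS (fun j => ((a j, (1 : ℤ)) : G × ℤ)) ⇑(gα i) =
      degS (fun j => ((a j, (1 : ℤ)) : G × ℤ)) ⇑(gβ i))
    {u v : Fin n →₀ ℕ} (h : SStep gα gβ u v) :
    degS (fun j => ((a j, (1 : ℤ)) : G × ℤ)) ⇑u = degS (fun j => ((a j, (1 : ℤ)) : G × ℤ)) ⇑v := by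
  rcases h with ⟨i, e, rfl, rfl⟩ | ⟨i, e, rfl, rfl⟩ <;>
    simp only [Finsupp.coe_add, degS_add, hdeg i]

lemma rtg_deg (hdeg : ∀ i, degS (fun j => ((a j, (1 : ℤ)) : G × ℤ)) ⇑(gα i) =
      degS (fun j => ((a j, (1 : ℤ)) : G × ℤ)) ⇑(gβ i))
    {u v : Fin n →₀ ℕ} (h : Relation.ReflTransGen (SStep gα gβ) u v) :
    degS (fun j => ((a j, (1 : ℤ)) : G × ℤ)) ⇑u = degS (fun j => ((a j, (1 : ℤ)) : G × ℤ)) ⇑v := by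
  induction h with
  | refl => rfl
  | tail _ hstep ih => exact ih.trans (sstep_deg hdeg hstep)

lemma sstep_dist (hdeg : ∀ i, degS (fun j => ((a j, (1 : ℤ)) : G × ℤ)) ⇑(gα i) =
      degS (fun j => ((a j, (1 : ℤ)) : G × ℤ)) ⇑(gβ i))
    {u v : Fin n →₀ ℕ} (h : SStep gα gβ u v) :
    factDist ⇑u ⇑v ≤ Finset.univ.sup (fun i : Fin s => ∑ j, gα i j) := by
  have hlen : ∀ i, ∑ j, (gα i) j = ∑ j, (gβ i) j := by
    intro i
    exact ((degS_pair_eq_iff a _ _).mp (hdeg i)).2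
  rcases h with ⟨i, e, rfl, rfl⟩ | ⟨i, e, rfl, rfl⟩
  · rw [Finsupp.coe_add, Finsupp.coe_add, factDist_add_left]
    exact le_trans (factDist_le_sum _ _) (Finset.le_sup (f := fun i => ∑ j, gα i j) (Finset.mem_univ i))
  · rw [Finsupp.coe_add, Finsupp.coe_add, factDist_add_left]
    exact le_trans (factDist_le_sum _ _) (le_of_eq_of_le (hlen i).symm
      (Finset.le_sup (f := fun i => ∑ j, gα i j) (Finset.mem_univ i)))

lemma isEqChain_of_rtg {b : G}
    (hdeg : ∀ i, degS (fun j => ((a j, (1 : ℤ)) : G × ℤ)) ⇑(gα i) =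
      degS (fun j => ((a j, (1 : ℤ)) : G × ℤ)) ⇑(gβ i))
    {u v : Fin n →₀ ℕ} (h : Relation.ReflTransGen (SStep gα gβ) u v)
    (hu : degS a ⇑u = b) :
    IsEqChain a b ((Finset.univ.sup (fun i : Fin s => ∑ j, gα i j) : ℕ) : ℕ∞) ⇑u ⇑v := by
  induction h with
  | refl => exact isEqChain_refl hu
  | @tail w v hrt hstep ih =>
    have hdw := rtg_deg (a := a) hdeg hrt
    have hdv := (rtg_deg (a := a) hdeg (hrt.tail hstep))
    rw [degS_pair_eq_iff] at hdv
    refine ih.snoc (hdv.1 ▸ hu) hdv.2.symm ?_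
    exact_mod_cast Nat.cast_le.mpr (sstep_dist hdeg hstep)

lemma ceq_le_sup (a : Fin n → G) (gα gβ : Fin s → (Fin n →₀ ℕ)) (K : Type) [Field K]
    (hdeg : ∀ i, degS (fun j => ((a j, (1 : ℤ)) : G × ℤ)) ⇑(gα i) =
      degS (fun j => ((a j, (1 : ℤ)) : G × ℤ)) ⇑(gβ i))
    (hspan : Ideal.span (Set.range fun i => monomial (gα i) (1 : K) - monomial (gβ i) 1) =
      latticeIdeal K (fun j => ((a j, (1 : ℤ)) : G × ℤ))) :
    ceq a ≤ ((Finset.univ.sup (fun i : Fin s => ∑ j, gα i j) : ℕ) : ℕ∞) := by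
  refine iSup₂_le fun b _ => sInf_le ?_
  intro lam nu hlam hnu hsum
  set u := Finsupp.equivFunOnFinite.symm lam with hu
  set v := Finsupp.equivFunOnFinite.symm nu with hv
  have hcu : ⇑u = lam := rfl
  have hcv : ⇑v = nu := rfl
  have hdegeq : degS (fun j => ((a j, (1 : ℤ)) : G × ℤ)) ⇑u =
      degS (fun j => ((a j, (1 : ℤ)) : G × ℤ)) ⇑v := by
    rw [degS_pair_eq_iff, hcu, hcv]
    exact ⟨hlam.trans hnu.symm, hsum⟩
  have hmem : (monomial u (1 : K) - monomial v 1) ∈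
      Ideal.span (Set.range fun i => monomial (gα i) (1 : K) - monomial (gβ i) 1) := by
    rw [hspan]
    exact Ideal.subset_span ⟨u, v, hdegeq, rfl⟩
  have hq := quot_eq_of_binomial_mem hmem
  have hrtg := rtg_of_eqvGen (Quot.eqvGen_exact hq)
  have := isEqChain_of_rtg (b := b) hdeg hrtg (by rw [hcu]; exact hlam)
  rwa [hcu, hcv] at this

end Part2

section Part1
variable {n : ℕ} {K : Type} [Field K] {G : Type*} [AddCommMonoid G]

lemma latticeIdeal_eq_bot_iff (a : Fin n → G) (K : Type) [Field K] :
    latticeIdeal K (fun j => ((a j, (1 : ℤ)) : G × ℤ)) = ⊥ ↔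
      ∀ α β : Fin n →₀ ℕ, degS (fun j => ((a j, (1 : ℤ)) : G × ℤ)) ⇑α =
        degS (fun j => ((a j, (1 : ℤ)) : G × ℤ)) ⇑β → α = β := by
  rw [latticeIdeal, Ideal.span_eq_bot]
  constructor
  · intro h α β hd
    have := h _ ⟨α, β, hd, rfl⟩
    rw [sub_eq_zero, monomial_eq_monomial_iff] at this
    rcases this with ⟨h1, _⟩ | ⟨h1, _⟩
    · exact h1
    · exact absurd h1 one_ne_zero
  · rintro h f ⟨α, β, hd, rfl⟩
    rw [h α β hd, sub_self]

lemma ceq_eq_zero_of_bot (a : Fin n → G) (K : Type) [Field K]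
    (h : latticeIdeal K (fun j => ((a j, (1 : ℤ)) : G × ℤ)) = ⊥) : ceq a = 0 := by
  rw [latticeIdeal_eq_bot_iff] at h
  refine le_antisymm (iSup₂_le fun b _ => ?_) (zero_le)
  refine sInf_le ?_
  intro lam nu hlam hnu hsum
  have : lam = nu := by
    have := h (Finsupp.equivFunOnFinite.symm lam) (Finsupp.equivFunOnFinite.symm nu) ?_
    · exact congrArg (⇑Finsupp.equivFunOnFinite) this
    · rw [degS_pair_eq_iff]
      exact ⟨hlam.trans hnu.symm, hsum⟩
  subst this
  exact isEqChain_refl hlam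

lemma zero_mem_of_ceqElem_eq_zero {a : Fin n → G} {b : G} (h : ceqElem a b = 0) :
    ∀ lam nu : Fin n → ℕ, degS a lam = b → degS a nu = b →
      ∑ i, lam i = ∑ i, nu i → IsEqChain a b 0 lam nu := by
  by_contra h0
  have : (1 : ℕ∞) ≤ ceqElem a b := by
    refine le_sInf fun N hN => ?_
    refine ENat.one_le_iff_ne_zero.mpr fun hz => h0 ?_
    rw [← hz]
    exact hN
  rw [h] at this
  exact absurd this (by simp)

lemma eq_of_isEqChain_zero {a : Fin n → G} {b : G} {lam nu : Fin n → ℕ}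
    (h : IsEqChain a b 0 lam nu) : lam = nu := by
  obtain ⟨k, γ, h0, hl, hdeg, hd⟩ := h
  have key : ∀ (t : ℕ) (ht : t < k + 1), γ ⟨t, ht⟩ = γ 0 := by
    intro t
    induction t with
    | zero => intro ht; rfl
    | succ t ih =>
      intro ht
      have ht' : t < k := by omega
      have hstep := hd ⟨t, ht'⟩
      have hzero : factDist (γ (Fin.castSucc ⟨t, ht'⟩)) (γ (Fin.succ ⟨t, ht'⟩)) = 0 := by
        exact_mod_cast le_antisymm hstep (zero_le)
      have hsums : ∑ i, γ (Fin.castSucc ⟨t, ht'⟩) i = ∑ i, γ (Fin.succ ⟨t, ht'⟩) i :=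
        (hdeg _).2.trans (hdeg _).2.symm
      have := eq_of_factDist_eq_zero hsums hzero
      have hcast : (⟨t + 1, ht⟩ : Fin (k + 1)) = Fin.succ ⟨t, ht'⟩ := rfl
      rw [hcast, ← this]
      exact ih (by omega)
  have := key k (by omega)
  have hlast : (Fin.last k) = ⟨k, by omega⟩ := rfl
  rw [← h0, ← hl, hlast, this]

lemma bot_of_ceq_eq_zero (a : Fin n → G) (K : Type) [Field K]
    (h : ceq a = 0) : latticeIdeal K (fun j => ((a j, (1 : ℤ)) : G × ℤ)) = ⊥ := by
  rw [latticeIdeal_eq_bot_iff]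
  intro α β hd
  rw [degS_pair_eq_iff] at hd
  set b := degS a ⇑α with hb
  have hbmem : b ∈ AddSubmonoid.closure (Set.range a) := degS_mem_closure a ⇑α
  have hle : ceqElem a b ≤ ceq a := le_biSup _ hbmem
  rw [h] at hle
  have hle0 : ceqElem a b = 0 := le_antisymm hle (zero_le)
  have hchain := zero_mem_of_ceqElem_eq_zero hle0 ⇑α ⇑β rfl hd.1.symm hd.2
  exact DFunLike.coe_injective (eq_of_isEqChain_zero hchain)

end Part1

section WH
variable {n : ℕ} {K : Type} [Field K] {G : Type*} [AddCommGroup G]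

lemma isWH_binomial (w : Fin n → G) (u v : Fin n →₀ ℕ) {b : G}
    (hu : Finsupp.weight w u = b) (hv : Finsupp.weight w v = b) :
    IsWeightedHomogeneous w (monomial u (1 : K) - monomial v 1) b := by
  intro d hd
  rw [coeff_sub, coeff_monomial, coeff_monomial] at hd
  by_cases h1 : u = d
  · exact h1 ▸ hu
  · by_cases h2 : v = d
    · exact h2 ▸ hv
    · rw [if_neg h1, if_neg h2, sub_zero] at hd
      exact absurd rfl hd

lemma whc_mul_homogeneous (w : Fin n → G) (p g : MvPolynomial (Fin n) K) {d : G}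
    (hg : g.IsWeightedHomogeneous w d) (b : G) :
    weightedHomogeneousComponent w b (p * g) =
      weightedHomogeneousComponent w (b - d) p * g := by
  classical
  conv_lhs => rw [p.as_sum, Finset.sum_mul, map_sum]
  conv_rhs => rw [p.as_sum, map_sum, Finset.sum_mul]
  refine Finset.sum_congr rfl fun e he => ?_
  have hmono : (monomial e (coeff e p)).IsWeightedHomogeneous w (Finsupp.weight w e) :=
    isWeightedHomogeneous_monomial _ _ _ rfl
  have hprod := hmono.mul hg
  by_cases hb : Finsupp.weight w e + d = b
  · have h1 : Finsupp.weight w e = b - d := eq_sub_of_add_eq hb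
    rw [← hb, hprod.weightedHomogeneousComponent_same]
    rw [show Finsupp.weight w e + d - d = Finsupp.weight w e from add_sub_cancel_right _ _]
    rw [hmono.weightedHomogeneousComponent_same]
  · rw [hprod.weightedHomogeneousComponent_ne b (Ne.symm hb)]
    rw [hmono.weightedHomogeneousComponent_ne (b - d)
      (fun h => hb (by rw [← h, sub_add_cancel]))]
    rw [zero_mul]

lemma weight_pair_eq_zero_iff (a : Fin n → G) (u : Fin n →₀ ℕ) :
    Finsupp.weight (fun j => ((a j, (1 : ℤ)) : G × ℤ)) u = 0 ↔ u = 0 := by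
  constructor
  · intro h
    rw [weight_eq_degS, degS_pair, Prod.ext_iff] at h
    have h2 : ((∑ i, u i : ℕ) : ℤ) = 0 := h.2
    have h3 : ∑ i, u i = 0 := by exact_mod_cast h2
    ext i
    exact Finset.sum_eq_zero_iff.mp h3 i (Finset.mem_univ i)
  · rintro rfl
    simp

lemma whc_zero_pair (a : Fin n → G) (q : MvPolynomial (Fin n) K) :
    weightedHomogeneousComponent (fun j => ((a j, (1 : ℤ)) : G × ℤ)) 0 q =
      C (constantCoeff q) := by
  classical
  ext d
  rw [coeff_weightedHomogeneousComponent]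
  by_cases hd : d = 0
  · subst hd
    simp [weight_pair_eq_zero_iff, constantCoeff_eq]
  · rw [if_neg (fun h => hd ((weight_pair_eq_zero_iff a d).mp h)), coeff_C, if_neg (fun h => hd h.symm)]

end WH

section Tel
lemma fin_telescope {A : Type*} [AddCommGroup A] : ∀ {k : ℕ} (f : Fin (k + 1) → A),
    f 0 - f (Fin.last k) = ∑ j : Fin k, (f j.castSucc - f j.succ) := by
  intro k
  induction k with
  | zero => intro f; simp [Fin.last]
  | succ k ih =>
    intro f
    rw [Fin.sum_univ_castSucc]
    have hterm : ∀ j : Fin k,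
        f (j.castSucc).castSucc - f (j.castSucc).succ
          = (f ∘ Fin.castSucc) j.castSucc - (f ∘ Fin.castSucc) j.succ := by
      intro j
      simp only [Function.comp_apply, Fin.succ_castSucc]
    calc f 0 - f (Fin.last (k + 1))
        = (f 0 - f ((Fin.last k).castSucc)) + (f ((Fin.last k).castSucc) - f (Fin.last (k + 1)))
          := by abel
      _ = ∑ j : Fin k, ((f ∘ Fin.castSucc) j.castSucc - (f ∘ Fin.castSucc) j.succ)
            + (f ((Fin.last k).castSucc) - f ((Fin.last k).succ)) := by
          rw [← ih (f ∘ Fin.castSucc), Fin.succ_last]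
          rfl
      _ = ∑ j : Fin k, (f j.castSucc.castSucc - f j.castSucc.succ)
            + (f ((Fin.last k).castSucc) - f ((Fin.last k).succ)) := by
          rw [Finset.sum_congr rfl fun j _ => (hterm j).symm]
end Tel

section Part3
variable {n s : ℕ} {G : Type*} [AddCommGroup G]

lemma sup_le_ceq (a : Fin n → G) (gα gβ : Fin s → (Fin n →₀ ℕ)) (K : Type) [Field K]
    (hs : s ≠ 0)
    (hne : ∀ i, gα i ≠ gβ i)
    (hdeg : ∀ i, degS (fun j => ((a j, (1 : ℤ)) : G × ℤ)) ⇑(gα i) =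
      degS (fun j => ((a j, (1 : ℤ)) : G × ℤ)) ⇑(gβ i))
    (hspan : Ideal.span (Set.range fun i => monomial (gα i) (1 : K) - monomial (gβ i) 1) =
      latticeIdeal K (fun j => ((a j, (1 : ℤ)) : G × ℤ)))
    (hmin : ∀ i, (monomial (gα i) (1 : K) - monomial (gβ i) 1) ∉
      Ideal.span {f | ∃ i', i' ≠ i ∧ f = monomial (gα i') (1 : K) - monomial (gβ i') 1}) :
    ((Finset.univ.sup (fun i : Fin s => ∑ j, gα i j) : ℕ) : ℕ∞) ≤ ceq a := by
  classical
  set ta := fun j => ((a j, (1 : ℤ)) : G × ℤ) with hta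
  set D := Finset.univ.sup (fun i : Fin s => ∑ j, gα i j) with hD
  by_contra hlt
  push_neg at hlt
  obtain ⟨i₀, -, hi₀⟩ := Finset.exists_mem_eq_sup Finset.univ
    (Finset.univ_nonempty_iff.mpr ⟨⟨0, Nat.pos_of_ne_zero hs⟩⟩) (fun i : Fin s => ∑ j, gα i j)
  set b := degS a ⇑(gα i₀) with hb
  have hble : ceqElem a b ≤ ceq a := le_biSup _ (degS_mem_closure a ⇑(gα i₀))
  have hElt : ceqElem a b < (D : ℕ∞) := lt_of_le_of_lt hble hlt
  obtain ⟨N, hN, hNlt⟩ := sInf_lt_iff.mp hElt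
  have hpair := (degS_pair_eq_iff a ⇑(gα i₀) ⇑(gβ i₀)).mp (hdeg i₀)
  obtain ⟨k, γ, h0, hl, hdegγ, hd⟩ := hN ⇑(gα i₀) ⇑(gβ i₀) rfl hpair.1.symm hpair.2
  set U : Fin (k + 1) → (Fin n →₀ ℕ) := fun j => Finsupp.equivFunOnFinite.symm (γ j) with hU
  have hUc : ∀ j, ⇑(U j) = γ j := fun j => rfl
  set btil := Finsupp.weight ta (gα i₀) with hbtil
  have hsumγ : ∀ j, ∑ i, γ j i = D := fun j => (hdegγ j).2.trans hi₀.symm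
  have hwU : ∀ j, Finsupp.weight ta (U j) = btil := by
    intro j
    rw [hbtil, weight_eq_degS, weight_eq_degS, hUc, degS_pair, degS_pair]
    refine Prod.ext_iff.mpr ⟨(hdegγ j).1, ?_⟩
    simp only
    exact_mod_cast congrArg (Nat.cast (R := ℤ)) ((hsumγ j).trans hi₀)
  have happ : ∀ (f : Fin n → ℕ) (i : Fin n), (Finsupp.equivFunOnFinite.symm f) i = f i :=
    fun _ _ => rfl
  set cm : Fin k → (Fin n →₀ ℕ) := fun j =>
    Finsupp.equivFunOnFinite.symm (fun i => min (γ j.castSucc i) (γ j.succ i)) with hcm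
  set dl : Fin k → (Fin n →₀ ℕ) := fun j =>
    Finsupp.equivFunOnFinite.symm
      (fun i => γ j.castSucc i - min (γ j.castSucc i) (γ j.succ i)) with hdl
  set dr : Fin k → (Fin n →₀ ℕ) := fun j =>
    Finsupp.equivFunOnFinite.symm
      (fun i => γ j.succ i - min (γ j.castSucc i) (γ j.succ i)) with hdr
  have hUl : ∀ j : Fin k, U j.castSucc = cm j + dl j := by
    intro j; ext i
    rw [Finsupp.add_apply, hU, hcm, hdl, happ, happ, happ]
    omega
  have hUr : ∀ j : Fin k, U j.succ = cm j + dr j := by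
    intro j; ext i
    rw [Finsupp.add_apply, hU, hcm, hdr, happ, happ, happ]
    omega
  have hwdldr : ∀ j : Fin k, Finsupp.weight ta (dl j) = Finsupp.weight ta (dr j) := by
    intro j
    have h1 : Finsupp.weight ta (cm j + dl j) = Finsupp.weight ta (cm j + dr j) := by
      rw [← hUl, ← hUr, hwU, hwU]
    rw [map_add, map_add] at h1
    exact add_left_cancel h1
  have hbin_mem : ∀ j : Fin k, (monomial (dl j) (1 : K) - monomial (dr j) 1) ∈
      Ideal.span (Set.range fun i => monomial (gα i) (1 : K) - monomial (gβ i) 1) := by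
    intro j
    rw [hspan]
    exact Ideal.subset_span ⟨dl j, dr j,
      by rw [← weight_eq_degS, ← weight_eq_degS]; exact hwdldr j, rfl⟩
  have hstep : ∀ j : Fin k, monomial (U j.castSucc) (1 : K) - monomial (U j.succ) 1
      = monomial (cm j) 1 * (monomial (dl j) (1 : K) - monomial (dr j) 1) := by
    intro j
    rw [hUl j, hUr j, mul_sub, monomial_mul, monomial_mul, one_mul]
  have hU0 : U 0 = gα i₀ := by rw [hU]; simp only [h0, Finsupp.equivFunOnFinite_symm_coe]
  have hUlast : U (Fin.last k) = gβ i₀ := by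
    rw [hU]; simp only [hl, Finsupp.equivFunOnFinite_symm_coe]
  have htel : (monomial (gα i₀) (1 : K) - monomial (gβ i₀) 1)
      = ∑ j : Fin k, (monomial (U j.castSucc) (1 : K) - monomial (U j.succ) 1) := by
    rw [← hU0, ← hUlast]
    exact fin_telescope (fun j => monomial (U j) (1 : K))
  choose Q hQ using fun j : Fin k => (Submodule.mem_span_range_iff_exists_fun _).mp (hbin_mem j)
  have hfp : (monomial (gα i₀) (1 : K) - monomial (gβ i₀) 1)
      = ∑ i, (∑ j : Fin k, monomial (cm j) 1 * Q j i) *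
          (monomial (gα i) (1 : K) - monomial (gβ i) 1) := by
    rw [htel]
    have h1 : ∀ j : Fin k, monomial (U j.castSucc) (1 : K) - monomial (U j.succ) 1
        = ∑ i, monomial (cm j) 1 * (Q j i * (monomial (gα i) (1 : K) - monomial (gβ i) 1)) := by
      intro j
      rw [hstep j, ← Finset.mul_sum]
      congr 1
      rw [← hQ j]
      exact Finset.sum_congr rfl fun i _ => (smul_eq_mul _ _).symm
    rw [Finset.sum_congr rfl fun j _ => h1 j, Finset.sum_comm]
    refine Finset.sum_congr rfl fun i _ => ?_
    rw [Finset.sum_mul]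
    exact Finset.sum_congr rfl fun j _ => (mul_assoc _ _ _).symm
  have hdist : ∀ j : Fin k, factDist (γ j.castSucc) (γ j.succ) < D := by
    intro j
    have h2 := lt_of_le_of_lt (hd j) hNlt
    exact_mod_cast h2
  have hcm0 : ∀ j : Fin k, cm j ≠ 0 := by
    intro j hzero
    have hzi : ∀ i, min (γ j.castSucc i) (γ j.succ i) = 0 := by
      intro i
      have := congrArg (fun x : Fin n →₀ ℕ => x i) hzero
      simpa [hcm, happ] using this
    have h1 := factDist_add_sum_min (γ j.castSucc) (γ j.succ)
    rw [Finset.sum_eq_zero fun i _ => hzi i] at h1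
    have h2 := hsumγ j.castSucc
    have h3 := hdist j
    omega
  have hconst : ∀ i, constantCoeff (∑ j : Fin k, monomial (cm j) (1 : K) * Q j i) = 0 := by
    intro i
    rw [map_sum]
    refine Finset.sum_eq_zero fun j _ => ?_
    rw [map_mul, constantCoeff_monomial, if_neg (hcm0 j), zero_mul]
  have hwgin : ∀ i, Finsupp.weight ta (gβ i) = Finsupp.weight ta (gα i) := by
    intro i
    rw [weight_eq_degS, weight_eq_degS]
    exact (hdeg i).symm
  have hgenWH : ∀ i, (monomial (gα i) (1 : K) - monomial (gβ i) 1).IsWeightedHomogeneous ta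
      (Finsupp.weight ta (gα i)) := fun i => isWH_binomial ta _ _ rfl (hwgin i)
  have hπf : weightedHomogeneousComponent ta btil
        (monomial (gα i₀) (1 : K) - monomial (gβ i₀) 1)
      = monomial (gα i₀) (1 : K) - monomial (gβ i₀) 1 := by
    rw [hbtil]
    exact (hgenWH i₀).weightedHomogeneousComponent_same
  have key : (monomial (gα i₀) (1 : K) - monomial (gβ i₀) 1)
      = ∑ i, weightedHomogeneousComponent ta (btil - Finsupp.weight ta (gα i))
            (∑ j : Fin k, monomial (cm j) 1 * Q j i) *
          (monomial (gα i) (1 : K) - monomial (gβ i) 1) := by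
    conv_lhs => rw [← hπf]
    rw [congrArg (weightedHomogeneousComponent ta btil) hfp, map_sum]
    exact Finset.sum_congr rfl fun i _ => whc_mul_homogeneous ta _ _ (hgenWH i) btil
  have hterm0 : weightedHomogeneousComponent ta (btil - Finsupp.weight ta (gα i₀))
      (∑ j : Fin k, monomial (cm j) (1 : K) * Q j i₀) = 0 := by
    rw [hbtil, sub_self, hta, whc_zero_pair, hconst i₀, map_zero]
  have hmem : (monomial (gα i₀) (1 : K) - monomial (gβ i₀) 1) ∈
      Ideal.span {f | ∃ i', i' ≠ i₀ ∧ f = monomial (gα i') (1 : K) - monomial (gβ i') 1} := by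
    rw [key, ← Finset.sum_erase_add _ _ (Finset.mem_univ i₀), hterm0, zero_mul, add_zero]
    refine Ideal.sum_mem _ fun i hi => ?_
    exact Ideal.mul_mem_left _ _ (Ideal.subset_span ⟨i, (Finset.mem_erase.mp hi).1, rfl⟩)
  exact hmin i₀ hmem

end Part3

lemma enat_cast_sup_sum {s n : ℕ} (g : Fin s → (Fin n →₀ ℕ)) :
    (Finset.univ.sup (fun i : Fin s => ∑ j, ((g i j : ℕ∞))) : ℕ∞)
      = ((Finset.univ.sup (fun i : Fin s => ∑ j, g i j) : ℕ) : ℕ∞) := by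
  rw [Finset.comp_sup_eq_sup_comp (Nat.cast : ℕ → ℕ∞)
    (fun x y => Nat.mono_cast.map_max) (by simp)]
  refine Finset.sup_congr rfl fun i _ => ?_
  rw [Function.comp_apply, Nat.cast_sum]


/-- **Theorem.** Let `S = ⟨a_1,…,a_n⟩ ⊆ ℤ^m ⊕ T` be a reduced monoid and
`S̃ = ⟨(a_1,1),…,(a_n,1)⟩`.
(1) `c_eq(S) = 0` iff `I_{S̃} = 0`;
(2) if `I_{S̃} ≠ 0` and `{f_1,…,f_s}` is a binomial generating set of `I_{S̃}`, then
`c_eq(S) ≤ max_i deg(f_i)`;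
(3) if `{f_1,…,f_s}` is a binomial minimal generating set of `I_{S̃}`, then
`c_eq(S) = max_i deg(f_i)`. -/
theorem ceq_eq_max_degree_minimal_generators
    {m n : ℕ} {T : Type} [AddCommGroup T] [Fintype T]
    (K : Type) [Field K]
    (a : Fin n → (Fin m → ℤ) × T)
    -- `S` is reduced:
    (hred : ∀ x, x ∈ AddSubmonoid.closure (Set.range a) →
      -x ∈ AddSubmonoid.closure (Set.range a) → x = 0)
    -- `a` is the minimal set of generators:
    (hmin : ∀ i, a i ∉ AddSubmonoid.closure (Set.range a \ {a i})) :
    (ceq a = 0 ↔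
      latticeIdeal K (fun j => ((a j, (1 : ℤ)) : ((Fin m → ℤ) × T) × ℤ)) = ⊥)
    ∧ (∀ (s : ℕ) (gα gβ : Fin s → (Fin n →₀ ℕ)),
        (∀ i, gα i ≠ gβ i) →
        (∀ i, degS (fun j => ((a j, (1 : ℤ)) : ((Fin m → ℤ) × T) × ℤ)) ⇑(gα i) =
              degS (fun j => ((a j, (1 : ℤ)) : ((Fin m → ℤ) × T) × ℤ)) ⇑(gβ i)) →
        Ideal.span (Set.range fun i => monomial (gα i) (1 : K) - monomial (gβ i) 1) =
          latticeIdeal K (fun j => ((a j, (1 : ℤ)) : ((Fin m → ℤ) × T) × ℤ)) →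
        latticeIdeal K (fun j => ((a j, (1 : ℤ)) : ((Fin m → ℤ) × T) × ℤ)) ≠ ⊥ →
        ceq a ≤ (Finset.univ.sup (fun i : Fin s => ∑ j, gα i j) : ℕ∞))
    ∧ (∀ (s : ℕ) (gα gβ : Fin s → (Fin n →₀ ℕ)),
        (∀ i, gα i ≠ gβ i) →
        (∀ i, degS (fun j => ((a j, (1 : ℤ)) : ((Fin m → ℤ) × T) × ℤ)) ⇑(gα i) =
              degS (fun j => ((a j, (1 : ℤ)) : ((Fin m → ℤ) × T) × ℤ)) ⇑(gβ i)) →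
        Ideal.span (Set.range fun i => monomial (gα i) (1 : K) - monomial (gβ i) 1) =
          latticeIdeal K (fun j => ((a j, (1 : ℤ)) : ((Fin m → ℤ) × T) × ℤ)) →
        -- minimality: no generator lies in the ideal generated by the others:
        (∀ i, (monomial (gα i) (1 : K) - monomial (gβ i) 1) ∉
          Ideal.span {f | ∃ i', i' ≠ i ∧
            f = monomial (gα i') (1 : K) - monomial (gβ i') 1}) →
        ceq a = (Finset.univ.sup (fun i : Fin s => ∑ j, gα i j) : ℕ∞)) := by
  classical
  have hc : ∀ (s : ℕ) (gα : Fin s → (Fin n →₀ ℕ)),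
      (Finset.univ.sup (fun i : Fin s => ∑ j, ((gα i j : ℕ∞))) : ℕ∞)
        = ((Finset.univ.sup (fun i : Fin s => ∑ j, gα i j) : ℕ) : ℕ∞) :=
    fun s gα => enat_cast_sup_sum gα
  refine ⟨⟨fun h => bot_of_ceq_eq_zero a K h, fun h => ceq_eq_zero_of_bot a K h⟩, ?_, ?_⟩
  · intro s gα gβ hne hdeg hspan hIne
    rw [hc s gα]
    exact ceq_le_sup a gα gβ K hdeg hspan
  · intro s gα gβ hne hdeg hspan hmin'
    rw [hc s gα]
    rcases Nat.eq_zero_or_pos s with hs | hs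
    · subst hs
      have hbot : latticeIdeal K (fun j => ((a j, (1 : ℤ)) : ((Fin m → ℤ) × T) × ℤ)) = ⊥ := by
        rw [← hspan, Set.range_eq_empty, Ideal.span_empty]
      rw [ceq_eq_zero_of_bot a K hbot]
      simp
    · exact le_antisymm (ceq_le_sup a gα gβ K hdeg hspan)
        (sup_le_ceq a gα gβ K hs.ne' hne hdeg hspan hmin')
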